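/- Let α > 0 and let Y be a real random variable such that exp(−2αY) is integrable. Then the function c ↦ E[(exp(−αc) − exp(−αY))²] on ℝ attains its unique minimum at c* = −α⁻¹ log E[exp(−αY)], i.e., at the entropic certainty equivalent EXD_α[Y]. -/

import Mathlib

open MeasureTheory Real

/-- The exponential MSE loss `c ↦ E[(exp(−αc) − exp(−αY))²]` attains its
unique minimum at the entropic certainty equivalent
`c* = −α⁻¹ log E[exp(−αY)]`. -/
theorem exponential_mse_minimizer
    {Ω : Type*} {m₀ : MeasurableSpace Ω} (μ : Measure Ω) [IsProbabilityMeasure μ]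
    {α : ℝ} (hα : 0 < α)
    (Y : Ω → ℝ) (hY : Integrable (fun ω => Real.exp (-(2 * α) * Y ω)) μ)
    (L : ℝ → ℝ)
    (hL : L = fun c => ∫ ω, (Real.exp (-α * c) - Real.exp (-α * Y ω)) ^ 2 ∂μ)
    (cstar : ℝ)
    (hcstar : cstar = -α⁻¹ * Real.log (∫ ω, Real.exp (-α * Y ω) ∂μ)) :
    (∀ c : ℝ, L cstar ≤ L c) ∧ (∀ c : ℝ, c ≠ cstar → L cstar < L c) := by
  set f : Ω → ℝ := fun ω => Real.exp (-α * Y ω) with hfdef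
  have hfsq : ∀ ω, f ω ^ 2 = Real.exp (-(2 * α) * Y ω) := by
    intro ω
    rw [hfdef]
    rw [← Real.exp_nat_mul]
    ring_nf
  have hmeas : AEStronglyMeasurable f μ := by
    have h := (Real.continuous_sqrt.comp_aestronglyMeasurable hY.aestronglyMeasurable)
    have : (fun ω => Real.sqrt (Real.exp (-(2 * α) * Y ω))) = f := by
      funext ω
      rw [← hfsq ω, Real.sqrt_sq (le_of_lt (Real.exp_pos _))]
    rwa [this] at h
  have hf : Integrable f μ := by
    refine Integrable.mono' ((integrable_const (1:ℝ)).add hY) hmeas ?_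
    filter_upwards with ω
    have h0 : 0 < f ω := Real.exp_pos _
    have h2 : f ω ^ 2 = Real.exp (-(2 * α) * Y ω) := hfsq ω
    simp only [Pi.add_apply]
    rw [Real.norm_eq_abs, abs_of_pos h0, ← h2]
    nlinarith [sq_nonneg (f ω - 1)]
  have hf2 : Integrable (fun ω => f ω ^ 2) μ := by
    refine hY.congr ?_
    filter_upwards with ω using (hfsq ω).symm
  set m : ℝ := ∫ ω, f ω ∂μ with hm
  set s : ℝ := ∫ ω, f ω ^ 2 ∂μ with hs
  have hmpos : 0 < m := by
    rw [hm, hfdef]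
    exact integral_exp_pos hf
  have expand : ∀ c : ℝ, L c = (Real.exp (-α * c) - m) ^ 2 + (s - m ^ 2) := by
    intro c
    rw [hL]
    set t : ℝ := Real.exp (-α * c) with ht
    have h1 : (fun ω => (t - f ω) ^ 2) = fun ω => (t ^ 2 - 2 * t * f ω) + f ω ^ 2 := by
      funext ω; ring
    show ∫ ω, (t - f ω) ^ 2 ∂μ = _
    simp only [h1]
    have hint1 : Integrable (fun ω => t ^ 2 - 2 * t * f ω) μ :=
      (integrable_const (t ^ 2)).sub (hf.const_mul (2 * t))
    rw [integral_add hint1 hf2,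
      integral_sub (integrable_const (t ^ 2)) (hf.const_mul (2 * t)),
      MeasureTheory.integral_const_mul, integral_const]
    simp [← hm, ← hs]
    ring
  have hcm : Real.exp (-α * cstar) = m := by
    rw [hcstar]
    have : -α * (-α⁻¹ * Real.log m) = Real.log m := by
      field_simp
    rw [this, Real.exp_log hmpos]
  constructor
  · intro c
    rw [expand c, expand cstar, hcm]
    nlinarith [sq_nonneg (Real.exp (-α * c) - m)]
  · intro c hc
    rw [expand c, expand cstar, hcm]
    have hne : Real.exp (-α * c) ≠ m := by
      intro h
      apply hc
      rw [← hcm] at h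
      have h2 := Real.exp_injective h
      have hα' : (-α) ≠ 0 := neg_ne_zero.mpr (ne_of_gt hα)
      exact mul_left_cancel₀ hα' h2
    have : 0 < (Real.exp (-α * c) - m) ^ 2 :=
      pow_two_pos_of_ne_zero (sub_ne_zero.mpr hne)
    nlinarith
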